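/- arXiv:1806.01722 — 3 statements merged into one kernel-verified Lean document; each statement's English description precedes it below -/
import Mathlib

section
/- Let a = k(k+1)(k+2)/(n(n+1)(n+2)), b = (k−1)k(k+1)/((n−1)n(n+1)), c = (k−2)(k−1)k/((n−2)(n−1)n), for integers 3 ≤ k < n (so all denominators are nonzero). Then a − 2b + c = 6·k(n−k)(2k−n)·Q for some rational Q ≠ 0, and in particular a/6 − b/3 + c/6 = 0 if and only if n = 2k. -/
/-- For integers `3 ≤ k < n`, with
`a = k(k+1)(k+2)/(n(n+1)(n+2))`, `b = (k-1)k(k+1)/((n-1)n(n+1))`,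
`c = (k-2)(k-1)k/((n-2)(n-1)n)`, we have `a - 2b + c = 6·k(n-k)(2k-n)·Q` for some
nonzero rational `Q`; in particular `a/6 - b/3 + c/6 = 0` if and only if `n = 2k`. -/
theorem hook_ratio_combination (k n : ℕ) (hk : 3 ≤ k) (hkn : k < n) :
    let a : ℚ := ((k : ℚ) * (k + 1) * (k + 2)) / ((n : ℚ) * (n + 1) * (n + 2))
    let b : ℚ := (((k : ℚ) - 1) * k * (k + 1)) / (((n : ℚ) - 1) * n * (n + 1))
    let c : ℚ := (((k : ℚ) - 2) * ((k : ℚ) - 1) * k) / (((n : ℚ) - 2) * ((n : ℚ) - 1) * n)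
    (∃ Q : ℚ, Q ≠ 0 ∧
        a - 2 * b + c = 6 * (k : ℚ) * ((n : ℚ) - k) * (2 * (k : ℚ) - n) * Q) ∧
      (a / 6 - b / 3 + c / 6 = 0 ↔ n = 2 * k) := by
  intro a b c
  have hn4 : 4 ≤ n := lt_of_le_of_lt hk hkn
  have hnQ : (4 : ℚ) ≤ (n : ℚ) := by exact_mod_cast hn4
  have hkQ : (3 : ℚ) ≤ (k : ℚ) := by exact_mod_cast hk
  have hknQ : (k : ℚ) < (n : ℚ) := by exact_mod_cast hkn
  have h0 : (n : ℚ) ≠ 0 := by linarith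
  have h1 : (n : ℚ) + 1 ≠ 0 := by linarith
  have h2 : (n : ℚ) + 2 ≠ 0 := by linarith
  have h3 : (n : ℚ) - 1 ≠ 0 := by linarith
  have h4 : (n : ℚ) - 2 ≠ 0 := by linarith
  have hD : ((n : ℚ) - 2) * ((n : ℚ) - 1) * n * (n + 1) * (n + 2) ≠ 0 := by
    simp only [mul_ne_zero_iff]
    exact ⟨⟨⟨⟨h4, h3⟩, h0⟩, h1⟩, h2⟩
  have hk0 : (k : ℚ) ≠ 0 := by linarith
  have hnk : (n : ℚ) - k ≠ 0 := by linarith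
  constructor
  · refine ⟨-1 / (((n : ℚ) - 2) * ((n : ℚ) - 1) * n * (n + 1) * (n + 2)), ?_, ?_⟩
    · simp only [ne_eq, div_eq_zero_iff, not_or]
      exact ⟨by norm_num, hD⟩
    · show a - 2 * b + c = _
      simp only [a, b, c]
      field_simp
      ring
  · have key : a / 6 - b / 3 + c / 6 =
        (k : ℚ) * ((n : ℚ) - k) * ((n : ℚ) - 2 * k) /
          (((n : ℚ) - 2) * ((n : ℚ) - 1) * n * (n + 1) * (n + 2)) := by
      simp only [a, b, c]
      field_simp
      ring
    rw [key, div_eq_zero_iff]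
    constructor
    · rintro (h | h)
      · rcases mul_eq_zero.mp h with h' | h'
        · rcases mul_eq_zero.mp h' with h'' | h''
          · exact absurd h'' hk0
          · exact absurd h'' hnk
        · have : (n : ℚ) = 2 * k := by linarith
          exact_mod_cast this
      · exact absurd h hD
    · intro h
      left
      have : (n : ℚ) = 2 * k := by exact_mod_cast congrArg (Nat.cast : ℕ → ℚ) h
      rw [this]; ring
end

section
/- Fix 1 ≤ k < n and pairwise distinct reals m₁,…,mₙ with ∑ m_i = 0. Define M(t) as the n×n matrix whose first k rows are (e^{−m_j t} m_j^{i−1})_{j=1..n} for i = 1,…,k, and whose remaining n−k rows are (m_j^{i−1})_{j=1..n} for i = 1,…,n−k. Then the coefficient of t^{k(n−k)+1} in the power series of det M(t) at t = 0 is zero. -/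
open Finset Polynomial


lemma strictMono_le_apply {n : ℕ} {f : Fin n → ℕ} (hf : StrictMono f) :
    ∀ v, ∀ hv : v < n, v ≤ f ⟨v, hv⟩ := by
  intro v
  induction v with
  | zero => intro _; exact Nat.zero_le _
  | succ w ih =>
    intro hv
    have h1 : f ⟨w, by omega⟩ < f ⟨w+1, hv⟩ := hf (by simp [Fin.lt_def])
    exact Nat.succ_le_of_lt (lt_of_le_of_lt (ih (by omega)) h1)

lemma finset_char {n : ℕ} (hn : 2 ≤ n) (S : Finset ℕ) (hcard : S.card = n)
    (hsum : ∑ x ∈ S, x = (∑ i ∈ range n, i) + 1) :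
    S = insert n (range (n - 1)) := by
  set f : Fin n → ℕ := fun i => S.orderEmbOfFin hcard i with hfdef
  have hmono : StrictMono f := (S.orderEmbOfFin hcard).strictMono
  have hmem : ∀ i, f i ∈ S := fun i => S.orderEmbOfFin_mem hcard i
  have hle : ∀ i : Fin n, (i : ℕ) ≤ f i := fun i => strictMono_le_apply hmono i.1 i.2
  have himg : Finset.image f Finset.univ = S := by
    apply Finset.eq_of_subset_of_card_le
    · intro x hx; simp only [mem_image] at hx; obtain ⟨i, _, rfl⟩ := hx; exact hmem i
    · rw [hcard, Finset.card_image_of_injective _ hmono.injective, Finset.card_univ,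
        Fintype.card_fin]
  have hsumf : ∑ i, f i = (∑ i ∈ range n, i) + 1 := by
    rw [← hsum, ← himg, Finset.sum_image (fun a _ b _ h => hmono.injective h)]
  have hsumi : ∑ i : Fin n, (i : ℕ) = ∑ i ∈ range n, i :=
    Fin.sum_univ_eq_sum_range (fun i => i) n
  have hdiff : ∑ i : Fin n, (f i - (i : ℕ)) = 1 := by
    have : ∑ i : Fin n, (f i - (i : ℕ)) = ∑ i : Fin n, f i - ∑ i : Fin n, (i : ℕ) := by
      rw [Finset.sum_tsub_distrib]; intro i _; exact hle i
    omega
  obtain ⟨i₀, -, hi₀⟩ : ∃ i₀ ∈ Finset.univ, f i₀ - (i₀ : ℕ) ≠ 0 := by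
    by_contra h
    push_neg at h
    rw [Finset.sum_eq_zero (fun i hi => h i hi)] at hdiff
    omega
  have hsplit : (f i₀ - (i₀ : ℕ)) + ∑ x ∈ Finset.univ.erase i₀, (f x - (x : ℕ))
      = ∑ x : Fin n, (f x - (x : ℕ)) :=
    Finset.add_sum_erase (Finset.univ) (fun i : Fin n => f i - (i : ℕ)) (Finset.mem_univ i₀)
  have hrest : ∀ j, j ≠ i₀ → f j = (j : ℕ) := by
    intro j hj
    have hj' : j ∈ Finset.univ.erase i₀ := Finset.mem_erase.2 ⟨hj, Finset.mem_univ j⟩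
    have h0 : ∑ i ∈ Finset.univ.erase i₀, (f i - (i : ℕ)) = 0 := by omega
    have := Finset.sum_eq_zero_iff.1 h0 j hj'
    have := hle j
    omega
  have hfi₀ : f i₀ = (i₀ : ℕ) + 1 := by have := hle i₀; omega
  have hlast : (i₀ : ℕ) = n - 1 := by
    by_contra hne
    have hlt : (i₀ : ℕ) + 1 < n := by have := i₀.2; omega
    have h2 : f i₀ < f ⟨(i₀ : ℕ) + 1, hlt⟩ := hmono (by simp [Fin.lt_def])
    rw [hrest ⟨(i₀ : ℕ) + 1, hlt⟩ (by simp only [ne_eq, Fin.ext_iff]; omega)] at h2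
    simp only [hfi₀] at h2
    omega
  have hsub : insert n (range (n - 1)) ⊆ S := by
    intro e he
    simp only [mem_insert, mem_range] at he
    rcases he with he | he
    · have h := hmem i₀
      rw [hfi₀, hlast] at h
      have he2 : n - 1 + 1 = n := by omega
      rw [he2] at h
      rwa [he]
    · have hlt : e < n := by omega
      have heq : f ⟨e, hlt⟩ = e := hrest ⟨e, hlt⟩ (by simp only [ne_eq, Fin.ext_iff]; omega)
      have := hmem ⟨e, hlt⟩; rwa [heq] at this
  refine (Finset.eq_of_subset_of_card_le hsub ?_).symm
  rw [hcard, Finset.card_insert_of_notMem (by simp only [mem_range]; omega), Finset.card_range]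
  omega

lemma det_pow_rows_eq_zero {n : ℕ} (hn : 2 ≤ n) (m : Fin n → ℝ)
    (hm : Function.Injective m) (hsum : ∑ j, m j = 0) (b : Fin n → ℕ)
    (hb : ∑ i, b i = (∑ i ∈ range n, i) + 1) :
    (Matrix.of fun i j : Fin n => m j ^ b i).det = 0 := by
  by_cases hinj : Function.Injective b
  · -- image of b is insert n (range (n-1))
    set S : Finset ℕ := Finset.image b Finset.univ with hS
    have hcard : S.card = n := by
      rw [hS, Finset.card_image_of_injective _ hinj, Finset.card_univ, Fintype.card_fin]
    have hsumS : ∑ x ∈ S, x = (∑ i ∈ range n, i) + 1 := by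
      rw [hS, Finset.sum_image (fun a _ c _ h => hinj h)]
      exact hb
    have hSchar : S = insert n (range (n - 1)) := finset_char hn S hcard hsumS
    -- the polynomial
    set P : ℝ[X] := ∏ l : Fin n, (X - C (m l)) with hP
    have hmonic : P.Monic := monic_prod_of_monic _ _ (fun l _ => monic_X_sub_C (m l))
    have hdeg : P.natDegree = n := by
      rw [hP, natDegree_prod_of_monic _ _ (fun l _ => monic_X_sub_C (m l))]
      simp [natDegree_X_sub_C]
    have hcoeffn : P.coeff n = 1 := by
      have := hmonic.coeff_natDegree
      rwa [hdeg] at this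
    have hcoeffn1 : P.coeff (n - 1) = 0 := by
      have h1 : P.nextCoeff = -∑ l, m l := prod_X_sub_C_nextCoeff (f := m) (s := Finset.univ)
      rw [nextCoeff_of_natDegree_pos (by omega), hdeg] at h1
      rw [h1, hsum, neg_zero]
    have heval : ∀ j, P.eval (m j) = 0 := by
      intro j
      rw [hP, eval_prod]
      exact Finset.prod_eq_zero (Finset.mem_univ j) (by simp)
    -- the vector
    set v : Fin n → ℝ := fun i => P.coeff (b i) with hv
    have hvM : Matrix.vecMul v (Matrix.of fun i j : Fin n => m j ^ b i) = 0 := by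
      funext j
      show ∑ i, v i * m j ^ b i = 0
      have h1 : ∑ i, v i * m j ^ b i = ∑ e ∈ S, P.coeff e * m j ^ e := by
        rw [hS, Finset.sum_image (fun a _ c _ h => hinj h)]
      have h2 : ∑ e ∈ range (n + 1), P.coeff e * m j ^ e
          = ∑ e ∈ S, P.coeff e * m j ^ e + P.coeff (n-1) * m j ^ (n-1) := by
        rw [hSchar]
        have hins : range (n + 1) = insert (n-1) (insert n (range (n - 1))) := by
          ext x
          simp only [mem_range, mem_insert]
          omega
        rw [hins, Finset.sum_insert (by simp only [mem_insert, mem_range]; omega), add_comm]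
      have h3 : ∑ e ∈ range (n + 1), P.coeff e * m j ^ e = 0 := by
        have := eval_eq_sum_range' (p := P) (n := n + 1) (by omega) (m j)
        rw [← this, heval j]
      rw [h1]
      rw [hcoeffn1] at h2
      simp only [zero_mul, add_zero] at h2
      rw [← h2, h3]
    have hvne : v ≠ 0 := by
      have hnS : n ∈ S := by rw [hSchar]; exact Finset.mem_insert_self _ _
      rw [hS] at hnS
      obtain ⟨i₀, -, hi₀⟩ := Finset.mem_image.1 hnS
      intro h0
      have : v i₀ = 0 := by rw [h0]; rfl
      rw [hv] at this
      simp only [hi₀, hcoeffn] at this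
      exact one_ne_zero this
    by_contra hdet
    exact hvne (Matrix.eq_zero_of_vecMul_eq_zero hdet hvM)
  · -- two equal rows
    simp only [Function.Injective, not_forall] at hinj
    obtain ⟨i, i', hbi, hne⟩ := hinj
    exact Matrix.det_zero_of_row_eq hne (by funext j; simp [hbi])


-- Step B
lemma iter_exp_sum {ι : Type*} (s : Finset ι) (b : ι → ℝ) (N : ℕ) :
    ∀ (c : ι → ℝ) (x : ℝ),
    iteratedDeriv N (fun t => ∑ σ ∈ s, c σ * Real.exp (b σ * t)) x
      = ∑ σ ∈ s, c σ * b σ ^ N * Real.exp (b σ * x) := by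
  induction N with
  | zero => intro c x; simp
  | succ N ih =>
    intro c x
    rw [iteratedDeriv_succ']
    have hderiv : (deriv fun t => ∑ σ ∈ s, c σ * Real.exp (b σ * t))
        = fun t => ∑ σ ∈ s, (c σ * b σ) * Real.exp (b σ * t) := by
      funext y
      have h : HasDerivAt (fun t => ∑ σ ∈ s, c σ * Real.exp (b σ * t))
          (∑ σ ∈ s, (c σ * b σ) * Real.exp (b σ * y)) y := by
        refine HasDerivAt.fun_sum fun σ _ => ?_
        have h1 : HasDerivAt (fun t : ℝ => b σ * t) (b σ) y := by
          simpa using (hasDerivAt_id y).const_mul (b σ)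
        have h2 := (h1.exp).const_mul (c σ)
        exact h2.congr_deriv (by ring)
      exact h.deriv
    rw [hderiv, ih]
    exact Finset.sum_congr rfl fun σ _ => by ring

-- helper: det of power-rows matrix via Leibniz
lemma det_pow_expand {n : ℕ} (m : Fin n → ℝ) (b : Fin n → ℕ) :
    (Matrix.of fun i j : Fin n => m j ^ b i).det
      = ∑ σ : Equiv.Perm (Fin n), ((Equiv.Perm.sign σ : ℤ) : ℝ) * ∏ i, m (σ i) ^ b i := by
  rw [← Matrix.det_transpose, Matrix.det_apply']
  rfl

-- arithmetic
lemma sum_range_split (k d : ℕ) :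
    (∑ i ∈ range k, i) + (∑ i ∈ range d, i) + k * d = ∑ i ∈ range (k + d), i := by
  induction d with
  | zero => simp
  | succ d ih =>
    rw [Finset.sum_range_succ, show k + (d+1) = (k+d)+1 by omega, Finset.sum_range_succ, ← ih]
    ring

/-- For `1 ≤ k < n` and pairwise distinct reals `m₁,…,mₙ` with `∑ m_j = 0`, let `M(t)` be the
`n×n` matrix whose first `k` rows are `(e^{-m_j t} m_j^{i-1})_j`, `i = 1,…,k`, and whose
remaining `n-k` rows are `(m_j^{i-1})_j`, `i = 1,…,n-k`. Then the coefficient of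
`t^{k(n-k)+1}` in the power series of `det M(t)` at `t = 0` vanishes, i.e. the
`(k(n-k)+1)`-st derivative of `det M(t)` at `0` is zero. -/
theorem det_coeff_vanishes (n k : ℕ) (hk : 1 ≤ k) (hkn : k < n)
    (m : Fin n → ℝ) (hm : Function.Injective m) (hsum : ∑ j, m j = 0) :
    iteratedDeriv (k * (n - k) + 1)
      (fun t : ℝ =>
        (Matrix.of fun i j : Fin n =>
          if (i : ℕ) < k then Real.exp (-(m j) * t) * m j ^ (i : ℕ)
          else m j ^ ((i : ℕ) - k)).det) 0 = 0 := by
  classical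
  have hn2 : 2 ≤ n := by omega
  set N := k * (n - k) + 1 with hN
  set e : Fin n → ℕ := fun i => if (i : ℕ) < k then (i : ℕ) else (i : ℕ) - k with he
  set F : Finset (Fin n) := Finset.univ.filter (fun i => (i : ℕ) < k) with hF
  set c : Equiv.Perm (Fin n) → ℝ :=
    fun σ => ((Equiv.Perm.sign σ : ℤ) : ℝ) * ∏ i : Fin n, m (σ i) ^ e i with hc
  set bb : Equiv.Perm (Fin n) → ℝ := fun σ => -∑ i ∈ F, m (σ i) with hbb
  -- Step A : rewrite the determinant as an exponential sum
  have hD : (fun t : ℝ =>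
        (Matrix.of fun i j : Fin n =>
          if (i : ℕ) < k then Real.exp (-(m j) * t) * m j ^ (i : ℕ)
          else m j ^ ((i : ℕ) - k)).det)
      = fun t => ∑ σ : Equiv.Perm (Fin n), c σ * Real.exp (bb σ * t) := by
    funext t
    rw [← Matrix.det_transpose, Matrix.det_apply']
    refine Finset.sum_congr rfl fun σ _ => ?_
    simp only [Matrix.transpose_apply, Matrix.of_apply]
    have h1 : ∏ i : Fin n, (if (i : ℕ) < k then Real.exp (-(m (σ i)) * t) * m (σ i) ^ (i : ℕ)
          else m (σ i) ^ ((i : ℕ) - k))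
        = (∏ i : Fin n, (if (i : ℕ) < k then Real.exp (-(m (σ i)) * t) else 1))
            * ∏ i : Fin n, m (σ i) ^ e i := by
      rw [← Finset.prod_mul_distrib]
      refine Finset.prod_congr rfl fun i _ => ?_
      by_cases h : (i : ℕ) < k <;> simp [he, h]
    have h2 : ∏ i : Fin n, (if (i : ℕ) < k then Real.exp (-(m (σ i)) * t) else 1)
        = Real.exp (bb σ * t) := by
      rw [← Finset.prod_filter, ← hF, ← Real.exp_sum]
      congr 1
      show ∑ i ∈ F, -m (σ i) * t = (-∑ i ∈ F, m (σ i)) * t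
      rw [neg_mul, Finset.sum_mul, ← Finset.sum_neg_distrib]
      exact Finset.sum_congr rfl fun i _ => (neg_mul _ _)
    rw [h1, h2]
    show _ = (((Equiv.Perm.sign σ : ℤ) : ℝ) * ∏ i : Fin n, m (σ i) ^ e i)
          * Real.exp (bb σ * t)
    ring
  rw [hD, iter_exp_sum]
  simp only [mul_zero, Real.exp_zero, mul_one]
  -- arithmetic about exponents
  have hesum : (∑ i ∈ range n, (if i < k then i else i - k)) + N
      = (∑ i ∈ range n, i) + 1 := by
    have hsplit : ∑ i ∈ range n, (if i < k then i else i - k)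
        = (∑ i ∈ range k, i) + ∑ i ∈ range (n - k), i := by
      have hcons := Finset.sum_Ico_consecutive
        (fun i => if i < k then i else i - k) (Nat.zero_le k) hkn.le
      rw [← Finset.range_eq_Ico, ← Finset.range_eq_Ico] at hcons
      rw [← hcons]
      congr 1
      · exact Finset.sum_congr rfl fun i hi => if_pos (mem_range.1 hi)
      · rw [Finset.sum_Ico_eq_sum_range]
        exact Finset.sum_congr rfl fun i _ => by rw [if_neg (by omega)]; omega
    rw [hsplit]
    have h := sum_range_split k (n - k)
    have hnk : k + (n - k) = n := by omega
    rw [hnk] at h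
    omega
  have hesum' : ∑ i : Fin n, e i = ∑ i ∈ range n, (if i < k then i else i - k) :=
    Fin.sum_univ_eq_sum_range (fun i => if i < k then i else i - k) n
  -- the inner determinants vanish
  have hdet0 : ∀ r : Fin n → ℕ, r ∈ Finset.piAntidiag F N →
      (∑ σ : Equiv.Perm (Fin n),
        ((Equiv.Perm.sign σ : ℤ) : ℝ) * ∏ i : Fin n, m (σ i) ^ (e i + r i)) = 0 := by
    intro r hr
    rw [← det_pow_expand]
    obtain ⟨hrsum, hrsupp⟩ := Finset.mem_piAntidiag.1 hr
    apply det_pow_rows_eq_zero hn2 m hm hsum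
    have hrult : ∑ i : Fin n, r i = N := by
      rw [← hrsum]
      exact (Finset.sum_subset (Finset.subset_univ F) fun i _ hi => by
        by_contra h; exact hi (hrsupp i h)).symm
    rw [Finset.sum_add_distrib, hrult, hesum']
    exact hesum
  -- multinomial expansion
  have step : ∀ σ : Equiv.Perm (Fin n), c σ * bb σ ^ N
      = (-1 : ℝ) ^ N * ∑ r ∈ Finset.piAntidiag F N,
          (Nat.multinomial F r : ℝ) *
            (((Equiv.Perm.sign σ : ℤ) : ℝ) * ∏ i : Fin n, m (σ i) ^ (e i + r i)) := by
    intro σ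
    have hb : bb σ ^ N = (-1 : ℝ) ^ N * (∑ i ∈ F, m (σ i)) ^ N := by
      show (-∑ i ∈ F, m (σ i)) ^ N = _
      exact neg_pow _ _
    rw [hb, Finset.sum_pow_eq_sum_piAntidiag F (fun i => m (σ i)) N, Finset.mul_sum,
      Finset.mul_sum, Finset.mul_sum]
    refine Finset.sum_congr rfl fun r hr => ?_
    have hrsupp := (Finset.mem_piAntidiag.1 hr).2
    have hprod : (∏ i : Fin n, m (σ i) ^ e i) * ∏ i ∈ F, m (σ i) ^ r i
        = ∏ i : Fin n, m (σ i) ^ (e i + r i) := by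
      have hext : ∏ i ∈ F, m (σ i) ^ r i = ∏ i : Fin n, m (σ i) ^ r i := by
        refine Finset.prod_subset (Finset.subset_univ F) fun i _ hi => ?_
        have h0 : r i = 0 := by by_contra h; exact hi (hrsupp i h)
        simp [h0]
      rw [hext, ← Finset.prod_mul_distrib]
      exact Finset.prod_congr rfl fun i _ => (pow_add _ _ _).symm
    show (((Equiv.Perm.sign σ : ℤ) : ℝ) * ∏ i : Fin n, m (σ i) ^ e i)
        * ((-1 : ℝ) ^ N * ((Nat.multinomial F r : ℝ) * ∏ i ∈ F, m (σ i) ^ r i)) = _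
    rw [← hprod]
    ring
  rw [Finset.sum_congr rfl fun σ _ => step σ, ← Finset.mul_sum, Finset.sum_comm]
  have hz : ∑ r ∈ Finset.piAntidiag F N, ∑ σ : Equiv.Perm (Fin n),
      (Nat.multinomial F r : ℝ) *
        (((Equiv.Perm.sign σ : ℤ) : ℝ) * ∏ i : Fin n, m (σ i) ^ (e i + r i)) = 0 := by
    refine Finset.sum_eq_zero fun r hr => ?_
    rw [← Finset.mul_sum, hdet0 r hr, mul_zero]
  rw [hz, mul_zero]
end

section
/- Let n ≥ 1 and let m₁,…,mₙ be pairwise distinct reals. For k = 1, define the n×n matrix M(t) with first row (e^{−m_j t})_{j=1..n} and rows 2,…,n given by (m_j^{i−2})_{j=1..n} for i = 2,…,n. Then the lowest nonvanishing term of det M(t) at t = 0 has order t^{n−1}, with coefficient (−1)^{σ} V/(n−1)! where V = ∏_{i<j}(m_i − m_j) is the Vandermonde determinant and σ is an explicit sign depending only on n (namely the sign of the permutation reversing n−1 rows, times (−1)^{n−1}). -/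
open Finset

lemma iterDeriv_exp_sum {ι : Type*} [Fintype ι] (b : ι → ℝ) (p : ℕ) (c : ι → ℝ) :
    iteratedDeriv p (fun t => ∑ i, c i * Real.exp (b i * t)) =
      fun t => ∑ i, c i * b i ^ p * Real.exp (b i * t) := by
  induction p generalizing c with
  | zero => simp
  | succ p ih =>
      rw [iteratedDeriv_succ']
      have h1 : deriv (fun t => ∑ i, c i * Real.exp (b i * t))
          = fun t => ∑ i, (c i * b i) * Real.exp (b i * t) := by
        funext t
        have h : HasDerivAt (fun t => ∑ i, c i * Real.exp (b i * t))
            (∑ i, (c i * b i) * Real.exp (b i * t)) t := by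
          apply HasDerivAt.fun_sum
          intro i _
          have := (((hasDerivAt_id t).const_mul (b i)).exp).const_mul (c i)
          simp only [mul_one, id] at this
          convert this using 1
          · rfl
          ring
        exact h.deriv
      rw [h1, ih (fun i => c i * b i)]
      funext t
      exact Finset.sum_congr rfl fun i _ => by ring

/-- The `k = 1` case of the determinant expansion: for pairwise distinct reals `m₁,…,mₙ`,
let `M(t)` be the `n×n` matrix with first row `(e^{-m_j t})_j` and rows `i = 2,…,n` equal
to `(m_j^{i-2})_j`. Then all derivatives of `det M(t)` at `0` of order `< n-1` vanish, and
the `t^{n-1}` coefficient is `(-1)^σ V/(n-1)!` where `V = ∏_{i<j}(m_i - m_j) ≠ 0` is the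
Vandermonde determinant and `σ = (n-1)(n-2)/2 + (n-1)` (the sign of the permutation
reversing `n-1` rows, times `(-1)^{n-1}`); i.e. the lowest nonvanishing term has order
`t^{n-1}`. -/
theorem det_expansion_k_one (n : ℕ) (hn : 1 ≤ n)
    (m : Fin n → ℝ) (hm : Function.Injective m) :
    let F : ℝ → ℝ := fun t =>
      (Matrix.of fun i j : Fin n =>
        if (i : ℕ) = 0 then Real.exp (-(m j) * t) else m j ^ ((i : ℕ) - 1)).det
    let V : ℝ := ∏ i : Fin n, ∏ j ∈ Finset.Ioi i, (m i - m j)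
    (∀ p < n - 1, iteratedDeriv p F 0 = 0) ∧
      iteratedDeriv (n - 1) F 0 = (-1) ^ ((n - 1) * (n - 2) / 2 + (n - 1)) * V ∧
      V ≠ 0 := by
  intro F V
  obtain ⟨N, rfl⟩ : ∃ N, n = N + 1 := ⟨n - 1, by omega⟩
  -- step 1: F as a sum of exponentials
  have hF : F = fun t => ∑ σ : Equiv.Perm (Fin (N + 1)),
      (((Equiv.Perm.sign σ : ℤ) : ℝ) * ∏ i : Fin N, m (σ i.succ) ^ (i : ℕ)) *
        Real.exp ((-m (σ 0)) * t) := by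
    funext t
    show (Matrix.of fun i j : Fin (N+1) =>
        if (i : ℕ) = 0 then Real.exp (-(m j) * t) else m j ^ ((i : ℕ) - 1)).det = _
    rw [← Matrix.det_transpose, Matrix.det_apply']
    refine Finset.sum_congr rfl fun σ _ => ?_
    rw [Fin.prod_univ_succ]
    simp only [Matrix.transpose_apply, Matrix.of_apply, Fin.val_zero, Fin.val_succ,
      if_pos rfl, Nat.succ_ne_zero, if_false, Nat.add_sub_cancel, if_true]
    ring
  -- step 2: derivatives as determinants
  have hD : ∀ p : ℕ, iteratedDeriv p F 0 =
      (Matrix.of fun i j : Fin (N+1) =>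
        if (i : ℕ) = 0 then (-(m j)) ^ p else m j ^ ((i : ℕ) - 1)).det := by
    intro p
    rw [hF, iterDeriv_exp_sum]
    rw [← Matrix.det_transpose, Matrix.det_apply']
    simp only [mul_zero, Real.exp_zero, mul_one]
    refine Finset.sum_congr rfl fun σ _ => ?_
    rw [Fin.prod_univ_succ]
    simp only [Matrix.transpose_apply, Matrix.of_apply, Fin.val_zero, Fin.val_succ,
      if_pos rfl, Nat.succ_ne_zero, if_false, Nat.add_sub_cancel, if_true]
    ring
  -- step 3: vanishing for p < N
  have hzero : ∀ p < N, iteratedDeriv p F 0 = 0 := by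
    intro p hp
    rw [hD p]
    have hrw : (Matrix.of fun i j : Fin (N+1) =>
        if (i : ℕ) = 0 then (-(m j)) ^ p else m j ^ ((i : ℕ) - 1)) =
        Matrix.updateRow (Matrix.of fun i j : Fin (N+1) =>
          if (i : ℕ) = 0 then m j ^ p else m j ^ ((i : ℕ) - 1)) 0
          ((-1 : ℝ) ^ p • fun j => m j ^ p) := by
      ext i j
      by_cases h : i = 0
      · subst h
        rw [Matrix.updateRow_self]
        simp only [Pi.smul_apply, smul_eq_mul, Matrix.of_apply, Fin.val_zero, if_true, if_pos rfl]
        rw [neg_pow]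
      · have h' : (i : ℕ) ≠ 0 := fun hc => h (Fin.ext hc)
        rw [Matrix.updateRow_ne h]
        simp [h', h]
    rw [hrw, Matrix.det_updateRow_smul]
    have h0 : (Matrix.updateRow (Matrix.of fun i j : Fin (N+1) =>
          if (i : ℕ) = 0 then m j ^ p else m j ^ ((i : ℕ) - 1)) 0
          (fun j => m j ^ p)) =
        (Matrix.of fun i j : Fin (N+1) =>
          if (i : ℕ) = 0 then m j ^ p else m j ^ ((i : ℕ) - 1)) := by
      apply Matrix.updateRow_eq_self
    rw [h0]
    have hdz : (Matrix.of fun i j : Fin (N+1) =>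
        if (i : ℕ) = 0 then m j ^ p else m j ^ ((i : ℕ) - 1)).det = 0 := by
      apply Matrix.det_zero_of_row_eq (i := 0) (j := (⟨p + 1, by omega⟩ : Fin (N+1)))
      · exact fun hc => by simpa using congrArg Fin.val hc
      · funext j
        simp
    rw [hdz, mul_zero]
  -- step 4: the top coefficient
  have hπval : ∀ i : Fin (N+1), (((finRotate (N+1)).symm i : Fin (N+1)) : ℕ)
      = if (i : ℕ) = 0 then N else (i : ℕ) - 1 := by
    intro i
    have h1 : (finRotate (N+1)).symm i = i - 1 := by
      apply (finRotate (N+1)).injective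
      simp [finRotate_succ_apply, sub_add_cancel]
    rw [h1, Fin.coe_sub_one]
    by_cases h : i = 0
    · subst h; simp
    · have h' : ¬ ((i : ℕ) = 0) := fun hc => h (Fin.ext hc)
      rw [if_neg h, if_neg h']
  have htop : iteratedDeriv N F 0 = ∏ i : Fin (N+1), ∏ j ∈ Ioi i, (m j - m i) := by
    rw [hD N]
    have hrw : (Matrix.of fun i j : Fin (N+1) =>
        if (i : ℕ) = 0 then (-(m j)) ^ N else m j ^ ((i : ℕ) - 1)) =
        Matrix.updateRow (((Matrix.vandermonde m).transpose).submatrix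
            ((finRotate (N+1)).symm) id) 0
          ((-1 : ℝ) ^ N • fun j => m j ^ N) := by
      ext i j
      by_cases h : i = 0
      · subst h
        rw [Matrix.updateRow_self]
        simp only [Pi.smul_apply, smul_eq_mul, Matrix.of_apply, Fin.val_zero, if_pos rfl,
          if_true]
        rw [neg_pow]
      · have h' : (i : ℕ) ≠ 0 := fun hc => h (Fin.ext hc)
        rw [Matrix.updateRow_ne h]
        simp only [Matrix.of_apply, if_neg h', Matrix.submatrix_apply, id,
          Matrix.transpose_apply, Matrix.vandermonde_apply, hπval, if_neg h']
    rw [hrw, Matrix.det_updateRow_smul]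
    have hrow : (((Matrix.vandermonde m).transpose).submatrix ((finRotate (N+1)).symm) id) 0
        = (fun j => m j ^ N) := by
      funext j
      simp only [Matrix.submatrix_apply, id, Matrix.transpose_apply, Matrix.vandermonde_apply,
        hπval, Fin.val_zero, if_pos rfl, if_true]
    have hsign : (Equiv.Perm.sign ((finRotate (N+1)).symm) : ℤ) = (-1) ^ N := by
      rw [show (finRotate (N+1)).symm = (finRotate (N+1))⁻¹ from rfl, Equiv.Perm.sign_inv,
        sign_finRotate]
      simp
    rw [← hrow, Matrix.updateRow_eq_self, Matrix.det_permute, Matrix.det_transpose,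
      Matrix.det_vandermonde]
    have : ((Equiv.Perm.sign ((finRotate (N+1)).symm) : ℤ) : ℝ) = (-1) ^ N := by
      rw [hsign]; push_cast; ring
    rw [this, ← mul_assoc, ← mul_pow]
    norm_num
  -- step 5: assemble
  have hcardsum : ∑ i : Fin (N+1), (Ioi i).card = N * (N - 1) / 2 + N := by
    have hcard : ∀ i : Fin (N+1), (Ioi i).card = N - (i : ℕ) := by
      intro i; rw [Fin.card_Ioi]; omega
    simp only [hcard]
    rw [Fin.sum_univ_eq_sum_range (fun k => N - k) (N+1)]
    have hrefl : ∑ k ∈ Finset.range (N+1), (N - k) = ∑ k ∈ Finset.range (N+1), k := by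
      have := Finset.sum_range_reflect (fun j => j) (N+1)
      simpa using this
    rw [hrefl]
    have hg : (∑ k ∈ Finset.range (N+1), k) * 2 = (N+1) * N := by
      simpa using Finset.sum_range_id_mul_two (N+1)
    have hmul : (N+1) * N = N * (N-1) + 2 * N := by
      cases N with
      | zero => simp
      | succ M => simp only [Nat.succ_sub_one]; ring
    set S := ∑ k ∈ Finset.range (N+1), k with hS
    generalize hA : (N+1) * N = A at hg hmul
    generalize hB : N * (N-1) = B at hmul ⊢
    omega
  have hVsign : (∏ i : Fin (N+1), ∏ j ∈ Ioi i, (m j - m i))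
      = (-1 : ℝ) ^ (N * (N - 1) / 2 + N) * V := by
    have h1 : ∀ i : Fin (N+1), ∏ j ∈ Ioi i, (m j - m i)
        = (-1 : ℝ) ^ (Ioi i).card * ∏ j ∈ Ioi i, (m i - m j) := by
      intro i
      rw [← Finset.prod_const, ← Finset.prod_mul_distrib]
      exact Finset.prod_congr rfl fun j _ => by ring
    rw [Finset.prod_congr rfl fun i _ => h1 i, Finset.prod_mul_distrib,
      Finset.prod_pow_eq_pow_sum, hcardsum]
  have hVne : V ≠ 0 := by
    refine Finset.prod_ne_zero_iff.mpr fun i _ => Finset.prod_ne_zero_iff.mpr fun j hj => ?_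
    exact sub_ne_zero.mpr (hm.ne (ne_of_lt (Finset.mem_Ioi.mp hj)))
  refine ⟨by simpa using hzero, ?_, hVne⟩
  simpa using htop.trans hVsign
end
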